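/- For every index m in {t, x, y, z}, the null-rotation generators a_m = Γ_p Γ_m − Γ_q Γ_m and b_m = Γ_p Γ_m + Γ_q Γ_m satisfy a_m² = 0 and b_m² = 0; consequently, for every real θ, (I₄ + (θ/2) • a_m)(I₄ − (θ/2) • a_m) = I₄ and (I₄ + (θ/2) • b_m)(I₄ − (θ/2) • b_m) = I₄. -/

import Mathlib

open Quaternion Matrix

/-- The split quaternions, with K = i, L = j, KL = k. -/
notation "ℍ'" => QuaternionAlgebra ℝ (-1) 0 1

/-- A = ℍ' ⊗_ℝ ℂ, realized as the quaternion algebra over ℂ with i² = −1, j² = 1. -/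
abbrev SplitQC := QuaternionAlgebra ℂ (-1) 0 1

namespace SplitQC
/-- K, the split-quaternion unit with K² = −1 -/
def K : SplitQC := ⟨0, 1, 0, 0⟩
/-- L, the split-quaternion unit with L² = 1 -/
def L : SplitQC := ⟨0, 0, 1, 0⟩
/-- KL, with (KL)² = 1 -/
def KL : SplitQC := ⟨0, 0, 0, 1⟩
/-- ℓ = 1 ⊗ i, the complex unit -/
def ll : SplitQC := ⟨Complex.I, 0, 0, 0⟩
end SplitQC

open SplitQC

/-- Index set {x, y, z, t, q, p} for the gamma matrices. -/
inductive Idx | x | y | z | t | q | p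
deriving DecidableEq

/-- The gamma matrices generating Cl(4,2). -/
def Γ : Idx → Matrix (Fin 4) (Fin 4) SplitQC
| Idx.x => !![0,0,0,1; 0,0,1,0; 0,1,0,0; 1,0,0,0]
| Idx.y => !![0,0,0,-ll; 0,0,ll,0; 0,-ll,0,0; ll,0,0,0]
| Idx.z => !![0,0,1,0; 0,0,0,-1; 1,0,0,0; 0,-1,0,0]
| Idx.t => !![0,0,L,0; 0,0,0,L; -L,0,0,0; 0,-L,0,0]
| Idx.q => !![0,0,K,0; 0,0,0,K; -K,0,0,0; 0,-K,0,0]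
| Idx.p => !![0,0,KL,0; 0,0,0,KL; -KL,0,0,0; 0,-KL,0,0]

/-- The metric of signature (4,2). -/
def g : Idx → Idx → ℝ
| Idx.x, Idx.x => 1 | Idx.y, Idx.y => 1 | Idx.z, Idx.z => 1 | Idx.q, Idx.q => 1
| Idx.t, Idx.t => -1 | Idx.p, Idx.p => -1
| _, _ => 0

/-- Common off-diagonal pattern of Γ_t, Γ_q, Γ_p. -/
private def Pmat : Matrix (Fin 4) (Fin 4) SplitQC := !![0,0,1,0; 0,0,0,1; -1,0,0,0; 0,-1,0,0]

private lemma key (w : SplitQC) (Q : Matrix (Fin 4) (Fin 4) SplitQC)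
    (h : ∀ i k, w * Q i k * w = 0) : (w • Q) * (w • Q) = 0 := by
  refine Matrix.ext fun i j => ?_
  simp only [Matrix.mul_apply, Matrix.smul_apply, smul_eq_mul, Matrix.zero_apply]
  have : ∀ k, w * Q i k * (w * Q k j) = 0 := fun k => by
    rw [← mul_assoc, h i k, zero_mul]
  simp [this]

private lemma gp : Γ Idx.p = KL • Pmat := by
  refine Matrix.ext fun i j => ?_
  fin_cases i <;> fin_cases j <;>
    simp [Γ, Pmat, smul_eq_mul, Matrix.vecHead, Matrix.vecTail]

private lemma gq : Γ Idx.q = K • Pmat := by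
  refine Matrix.ext fun i j => ?_
  fin_cases i <;> fin_cases j <;>
    simp [Γ, Pmat, smul_eq_mul, Matrix.vecHead, Matrix.vecTail]

set_option maxHeartbeats 4000000 in
private lemma hwqw (m : Idx)
    (hm : m = Idx.t ∨ m = Idx.x ∨ m = Idx.y ∨ m = Idx.z) (ε : ℂ) (hε : ε ^ 2 = 1) :
    ∀ i k, (KL + ε • K) * (Pmat * Γ m) i k * (KL + ε • K) = 0 := by
  rcases hm with rfl | rfl | rfl | rfl <;> intro i k <;> fin_cases i <;> fin_cases k <;>
    simp [Matrix.mul_apply, Fin.sum_univ_four, Γ, Pmat, K, L, KL, ll,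
      QuaternionAlgebra.ext_iff, Matrix.vecHead, Matrix.vecTail] <;>
    (try ring_nf) <;> simp [hε]

private lemma inv_of_sq_zero (a : Matrix (Fin 4) (Fin 4) SplitQC) (s : ℝ)
    (h : a ^ 2 = 0) : (1 + s • a) * (1 - s • a) = 1 := by
  have h' : a * a = 0 := by rwa [← pow_two]
  simp only [mul_sub, add_mul, one_mul, mul_one, Matrix.smul_mul, Matrix.mul_smul, h',
    smul_zero, add_zero]
  abel

/-- The null-rotation generators a_m = Γ_p Γ_m − Γ_q Γ_m and b_m = Γ_p Γ_m + Γ_q Γ_m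
(m ∈ {t,x,y,z}) square to zero, so (I + (θ/2) a_m)(I − (θ/2) a_m) = I and likewise for b_m. -/
theorem null_rotation_generators_sq_zero (m : Idx)
    (hm : m = Idx.t ∨ m = Idx.x ∨ m = Idx.y ∨ m = Idx.z) (θ : ℝ) :
    let a := Γ Idx.p * Γ m - Γ Idx.q * Γ m
    let b := Γ Idx.p * Γ m + Γ Idx.q * Γ m
    a ^ 2 = 0 ∧ b ^ 2 = 0 ∧
    ((1 : Matrix (Fin 4) (Fin 4) SplitQC) + (θ / 2) • a) * (1 - (θ / 2) • a) = 1 ∧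
    ((1 : Matrix (Fin 4) (Fin 4) SplitQC) + (θ / 2) • b) * (1 - (θ / 2) • b) = 1 := by
  intro a b
  have hKsub : KL - K = KL + (-1 : ℂ) • K := by
    simp [sub_eq_add_neg, QuaternionAlgebra.ext_iff, K, KL]
  have hKadd : KL + K = KL + (1 : ℂ) • K := by
    simp [QuaternionAlgebra.ext_iff, K, KL]
  have ha : a ^ 2 = 0 := by
    have : a = (KL - K) • (Pmat * Γ m) := by
      show Γ Idx.p * Γ m - Γ Idx.q * Γ m = _
      rw [gp, gq, Matrix.smul_mul, Matrix.smul_mul, ← sub_smul]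
    rw [this, pow_two, hKsub]
    exact key _ _ (hwqw m hm (-1) (by norm_num))
  have hb : b ^ 2 = 0 := by
    have : b = (KL + K) • (Pmat * Γ m) := by
      show Γ Idx.p * Γ m + Γ Idx.q * Γ m = _
      rw [gp, gq, Matrix.smul_mul, Matrix.smul_mul, ← add_smul]
    rw [this, pow_two, hKadd]
    exact key _ _ (hwqw m hm 1 (by norm_num))
  exact ⟨ha, hb, inv_of_sq_zero a _ ha, inv_of_sq_zero b _ hb⟩
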